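/- Let $v:2^A\to\mathbb{R}$ be a set function on a finite set $A$ with $|A|=n\ge 1$, and let $c\ge 0$. Suppose for every nonempty $B\subseteq A$, $\sum_{b\in B}(v(B)-v(B\setminus\{b\}))\le c$. Then $v(A)\le v(\emptyset)+H_n\, c$, where $H_n=\sum_{t=1}^n 1/t$ is the $n$-th harmonic number. -/
import Mathlib


open Finset

theorem greedy_harmonic_bound {α : Type*} [DecidableEq α] [Fintype α]
    (v : Finset α → ℝ) (n : ℕ) (hn : n = Fintype.card α) (hn1 : 1 ≤ n)
    (c : ℝ) (hc : 0 ≤ c)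
    (h : ∀ B : Finset α, B.Nonempty → ∑ b ∈ B, (v B - v (B.erase b)) ≤ c) :
    v Finset.univ ≤ v ∅ + (∑ t ∈ Finset.range n, (1 : ℝ) / (t + 1)) * c := by
  have key : ∀ k : ℕ, ∀ B : Finset α, B.card = k →
      v B ≤ v ∅ + (∑ t ∈ Finset.range k, (1 : ℝ) / (t + 1)) * c := by
    intro k
    induction k with
    | zero =>
      intro B hB
      rw [Finset.card_eq_zero] at hB
      simp [hB]
    | succ k ih =>
      intro B hB
      have hne : B.Nonempty := Finset.card_pos.mp (by omega)
      have havg : ∃ b ∈ B, v B - v (B.erase b) ≤ c / B.card := by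
        by_contra hcon
        push_neg at hcon
        have : ∑ b ∈ B, (c / B.card) < ∑ b ∈ B, (v B - v (B.erase b)) :=
          Finset.sum_lt_sum_of_nonempty hne hcon
        rw [Finset.sum_const, nsmul_eq_mul, mul_div_cancel₀] at this
        · linarith [h B hne]
        · exact_mod_cast Finset.card_ne_zero.mpr hne
      obtain ⟨b, hb, hle⟩ := havg
      have hcard : (B.erase b).card = k := by
        rw [Finset.card_erase_of_mem hb, hB]; rfl
      have := ih (B.erase b) hcard
      rw [Finset.sum_range_succ]
      have hBk : (B.card : ℝ) = (k : ℝ) + 1 := by exact_mod_cast hB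
      have : v B ≤ v (B.erase b) + c / ((k : ℝ) + 1) := by
        rw [← hBk]; linarith
      calc v B ≤ v (B.erase b) + c / ((k : ℝ) + 1) := this
        _ ≤ v ∅ + (∑ t ∈ Finset.range k, (1 : ℝ) / (t + 1)) * c + c / ((k : ℝ) + 1) := by
            linarith [ih (B.erase b) hcard]
        _ = v ∅ + ((∑ t ∈ Finset.range k, (1 : ℝ) / (t + 1)) + 1 / ((k : ℝ) + 1)) * c := by
            ring
  have := key (Fintype.card α) Finset.univ (Finset.card_univ)
  rwa [hn]
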